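/- (No-Programming Theorem, part 2: program dimension bound.) Let d, d_P, N be positive integers. Let G be a unitary operator on ℂ^d ⊗ ℂ^{d_P} (realized as ℂ^(d×d_P)), let U_1, …, U_N be unitary d×d complex matrices that are pairwise distinct up to a global phase (for i ≠ j there is no c ∈ ℂ with U_i = c·U_j), and suppose there exist unit vectors P_1, …, P_N ∈ ℂ^{d_P} and vectors P_1', …, P_N' ∈ ℂ^{d_P} such that for every i and every ψ ∈ ℂ^d one has G(ψ ⊗ P_i) = (U_i ψ) ⊗ P_i'. Then the program register is at least N-dimensional: d_P ≥ N. -/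
import Mathlib


/-- The tensor product of a vector `ψ : ℂ^d` with a vector `φ : ℂ^m`,
realized as a vector indexed by `Fin d × Fin m` with entries `ψ a * φ b`. -/
noncomputable def tensorVec {d m : ℕ} (ψ : Fin d → ℂ) (φ : Fin m → ℂ) :
    Fin d × Fin m → ℂ := fun p => ψ p.1 * φ p.2

open scoped Matrix

lemma tensor_dot {d m : ℕ} (ψ ψ' : Fin d → ℂ) (φ φ' : Fin m → ℂ) :
    star (tensorVec ψ φ) ⬝ᵥ tensorVec ψ' φ' = (star ψ ⬝ᵥ ψ') * (star φ ⬝ᵥ φ') := by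
  simp only [dotProduct, tensorVec, Pi.star_apply, star_mul', Fintype.sum_prod_type,
    Finset.sum_mul_sum]
  apply Finset.sum_congr rfl
  intro a _
  apply Finset.sum_congr rfl
  intro b _
  ring

lemma unitary_dot {n : Type*} [Fintype n] [DecidableEq n] (A : Matrix n n ℂ)
    (hA : A ∈ Matrix.unitaryGroup n ℂ) (x y : n → ℂ) :
    star (A.mulVec x) ⬝ᵥ A.mulVec y = star x ⬝ᵥ y := by
  rw [Matrix.star_mulVec, Matrix.dotProduct_mulVec, Matrix.vecMul_vecMul,
    ← Matrix.star_eq_conjTranspose, hA.1, Matrix.vecMul_one]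

lemma quad_zero {n : ℕ} (A : Matrix (Fin n) (Fin n) ℂ)
    (h : ∀ v : Fin n → ℂ, star v ⬝ᵥ A.mulVec v = 0) : A = 0 := by
  have key : ∀ (a b : Fin n) (x y : ℂ),
      star (Pi.single a x + Pi.single b y) ⬝ᵥ A.mulVec (Pi.single a x + Pi.single b y) = 0 :=
    fun a b x y => h _
  have diag : ∀ a, A a a = 0 := by
    intro a
    have := h (Pi.single a 1)
    simpa [dotProduct, Pi.single_apply, Matrix.mulVec, Finset.mul_sum,
      apply_ite, Finset.sum_ite_eq'] using this
  ext a b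
  by_cases hab : a = b
  · subst hab; simpa using diag a
  · have expand : ∀ x y : ℂ,
        (starRingEnd ℂ) x * y * A a b + (starRingEnd ℂ) y * x * A b a = 0 := by
      intro x y
      have := key a b x y
      simp only [star_add, Matrix.mulVec_add, add_dotProduct, dotProduct_add] at this
      have e : ∀ (i j : Fin n) (u w : ℂ),
          star (Pi.single i u) ⬝ᵥ A.mulVec (Pi.single j w) = (starRingEnd ℂ) u * (A i j * w) := by
        intro i j u w
        simp [dotProduct, Pi.single_apply, Matrix.mulVec, apply_ite star,
          Finset.mul_sum, Finset.sum_ite_eq', RCLike.star_def, apply_ite (starRingEnd ℂ)]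
      rw [e, e, e, e, diag a, diag b] at this
      linear_combination this
    have h1 := expand 1 1
    have h2 := expand 1 Complex.I
    simp only [map_one, one_mul, mul_one, Complex.conj_I] at h1 h2
    -- h1 : A a b + A b a = 0, h2 : I * A a b + (-I) * A b a = 0 (roughly)
    have hI2 : Complex.I * Complex.I = -1 := Complex.I_mul_I
    show A a b = 0
    linear_combination (1/2 : ℂ) * h1 - (Complex.I/2) * h2 + ((A a b - A b a)/2) * hI2

/-- No-Programming Theorem, part 2: the program register is at least `N`-dimensional. -/
theorem no_programming_dimension
    (d dP N : ℕ) (hd : 0 < d) (hdP : 0 < dP) (hN : 0 < N)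
    (G : Matrix (Fin d × Fin dP) (Fin d × Fin dP) ℂ)
    (hG : G ∈ Matrix.unitaryGroup (Fin d × Fin dP) ℂ)
    (U : Fin N → Matrix (Fin d) (Fin d) ℂ)
    (hU : ∀ i, U i ∈ Matrix.unitaryGroup (Fin d) ℂ)
    (hdistinct : ∀ i j, i ≠ j → ∀ c : ℂ, U i ≠ c • U j)
    (P P' : Fin N → (Fin dP → ℂ))
    (hPunit : ∀ i, ∑ a, star (P i a) * P i a = 1)
    (hproc : ∀ i (ψ : Fin d → ℂ),
      G.mulVec (tensorVec ψ (P i)) = tensorVec ((U i).mulVec ψ) (P' i)) :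
    N ≤ dP := by
  classical
  have orth : ∀ i j, i ≠ j → star (P i) ⬝ᵥ P j = 0 := by
    intro i j hij
    by_contra hne
    set M : Matrix (Fin d) (Fin d) ℂ := (U i)ᴴ * U j with hM
    set ip : ℂ := star (P i) ⬝ᵥ P j with hip
    set ip' : ℂ := star (P' i) ⬝ᵥ P' j with hip'
    have main : ∀ ψ : Fin d → ℂ,
        (star ψ ⬝ᵥ M.mulVec ψ) * ip' = (star ψ ⬝ᵥ ψ) * ip := by
      intro ψ
      have h1 := unitary_dot G hG (tensorVec ψ (P i)) (tensorVec ψ (P j))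
      rw [hproc i ψ, hproc j ψ, tensor_dot, tensor_dot] at h1
      rw [← h1]
      congr 1
      rw [Matrix.star_mulVec, Matrix.dotProduct_mulVec, Matrix.dotProduct_mulVec,
        Matrix.vecMul_vecMul, hM]
    have hip'ne : ip' ≠ 0 := by
      intro h0
      apply hne
      have := main (Pi.single ⟨0, hd⟩ 1)
      have hunit : star (Pi.single (⟨0, hd⟩ : Fin d) (1:ℂ)) ⬝ᵥ Pi.single ⟨0, hd⟩ 1 = 1 := by
        simp [dotProduct, Pi.single_apply, apply_ite star, Finset.sum_ite_eq']
      rw [h0, hunit, mul_zero, one_mul] at this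
      exact this.symm
    set lam : ℂ := ip / ip' with hlam
    have hquad : ∀ ψ : Fin d → ℂ, star ψ ⬝ᵥ (M - lam • 1).mulVec ψ = 0 := by
      intro ψ
      have hm := main ψ
      have : star ψ ⬝ᵥ (M - lam • 1).mulVec ψ
          = star ψ ⬝ᵥ M.mulVec ψ - lam * (star ψ ⬝ᵥ ψ) := by
        rw [Matrix.sub_mulVec, dotProduct_sub]
        congr 1
        rw [Matrix.smul_mulVec, Matrix.one_mulVec, dotProduct_smul, smul_eq_mul]
      rw [this, hlam]
      field_simp
      linear_combination hm
    have hMeq : M = lam • 1 := by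
      exact eq_of_sub_eq_zero (quad_zero (M - lam • 1) hquad)
    have hUj : U j = lam • U i := by
      have h2 : U i * M = U i * (lam • 1) := by rw [hMeq]
      rw [hM, ← mul_assoc, ← Matrix.star_eq_conjTranspose, (Matrix.mem_unitaryGroup_iff.mp (hU i)),
        one_mul, mul_smul_comm, mul_one] at h2
      exact h2
    exact hdistinct j i hij.symm lam hUj
  have hdot : ∀ i, star (P i) ⬝ᵥ P i = 1 := by
    intro i
    simpa [dotProduct] using hPunit i
  have li : LinearIndependent ℂ P := by
    rw [Fintype.linearIndependent_iff]
    intro g hg j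
    have hz : star (P j) ⬝ᵥ (∑ i, g i • P i) = 0 := by rw [hg, dotProduct_zero]
    have hz2 : ∑ i, g i * (star (P j) ⬝ᵥ P i) = 0 := by
      rw [← hz]
      simp only [dotProduct, Finset.sum_apply, Pi.smul_apply, smul_eq_mul,
        Finset.mul_sum, Finset.sum_mul]
      rw [Finset.sum_comm]
      exact Finset.sum_congr rfl fun a _ => Finset.sum_congr rfl fun i _ => by ring
    rw [Finset.sum_eq_single j (fun i _ hne => by rw [orth j i (Ne.symm hne), mul_zero])
      (by simp), hdot j, mul_one] at hz2
    exact hz2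
  have hcard := li.fintype_card_le_finrank
  simpa using hcard
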